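/- Let G be a graph with a vertex v whose neighbourhood N(v) is contained in the neighbourhood N(u) of some other vertex u ≠ v. Then the neighbourhood complex N(G) is homotopy equivalent to the neighbourhood complex N(G − v). -/
import Mathlib


def IsChordal {V : Type*} (G : SimpleGraph V) : Prop :=
  ∀ n : ℕ, 4 ≤ n → IsEmpty (SimpleGraph.cycleGraph n ↪g G)

def IsSimplicialVertex {V : Type*} (G : SimpleGraph V) (v : V) : Prop :=
  G.IsClique (G.neighborSet v)

def IsNConnectedGraph {V : Type*} [Fintype V] (n : ℕ) (G : SimpleGraph V) : Prop :=
  n < Fintype.card V ∧ ∀ S : Finset V, S.card < n → (G.induce ((↑S : Set V)ᶜ)).Connected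

def IsVertexCut {V : Type*} [Fintype V] (G : SimpleGraph V) (S : Finset V) : Prop :=
  ¬ (G.induce ((↑S : Set V)ᶜ)).Connected

def IsMinimalVertexCut {V : Type*} [Fintype V] (G : SimpleGraph V) (S : Finset V) : Prop :=
  IsVertexCut G S ∧ ∀ S' : Finset V, S'.card < S.card → (G.induce ((↑S' : Set V)ᶜ)).Connected

def IsMaximalClique {V : Type*} (G : SimpleGraph V) (s : Finset V) : Prop :=
  G.IsClique ↑s ∧ ∀ t : Finset V, G.IsClique ↑t → s ⊆ t → s = t

def nbhdFaces {V : Type*} (G : SimpleGraph V) : Set (Finset V) :=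
  {σ | ∃ w, ∀ x ∈ σ, G.Adj w x}

abbrev geomReal {V : Type*} (K : Set (Finset V)) : Type _ :=
  {f : V → ℝ // ∃ σ ∈ K, (∀ v, f v ≠ 0 → v ∈ σ) ∧ (∀ v, 0 ≤ f v) ∧ ∑ v ∈ σ, f v = 1}

def IsNConnectedSpace (k : ℤ) (X : Type*) [TopologicalSpace X] : Prop :=
  ∀ m : ℕ, (m : ℤ) ≤ k →
    ∀ f : C(Metric.sphere (0 : EuclideanSpace ℝ (Fin (m + 1))) 1, X),
      ∃ g : C(Metric.closedBall (0 : EuclideanSpace ℝ (Fin (m + 1))) 1, X),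
        ∀ x : Metric.sphere (0 : EuclideanSpace ℝ (Fin (m + 1))) 1,
          g ⟨x.1, Metric.sphere_subset_closedBall x.2⟩ = f x

structure SimpComplex (V : Type*) where
  faces : Set (Finset V)
  down_closed : ∀ σ ∈ faces, ∀ τ ⊆ σ, τ ∈ faces

def suspSetoid (X : Type*) : Setoid (X × unitInterval) where
  r p q := p = q ∨ (p.2 = 0 ∧ q.2 = 0) ∨ (p.2 = 1 ∧ q.2 = 1)
  iseqv := by
    constructor
    · intro p; exact Or.inl rfl
    · rintro p q (rfl | h | h) <;> tauto
    · rintro p q r (rfl | h | h) (h2 | h2 | h2) <;> simp_all <;> tauto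

abbrev Susp (X : Type*) [TopologicalSpace X] : Type _ := Quotient (suspSetoid X)

def queenGraph (m n : ℕ) : SimpleGraph (Fin m × Fin n) :=
  SimpleGraph.fromRel fun a b =>
    a.1 = b.1 ∨ a.2 = b.2 ∨ |((a.1 : ℕ) : ℤ) - ((b.1 : ℕ) : ℤ)| = |((a.2 : ℕ) : ℤ) - ((b.2 : ℕ) : ℤ)|

def kingGraph (m n : ℕ) : SimpleGraph (Fin m × Fin n) :=
  SimpleGraph.fromRel fun a b =>
    |((a.1 : ℕ) : ℤ) - ((b.1 : ℕ) : ℤ)| ≤ 1 ∧ |((a.2 : ℕ) : ℤ) - ((b.2 : ℕ) : ℤ)| ≤ 1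

namespace Stmt9Aux

variable {V : Type*} [DecidableEq V]

def fwdFun (u v : V) (x : V → ℝ) (w : {w : V | w ≠ v}) : ℝ :=
  x w.1 + if w.1 = u then x v else 0

def bwdFun (v : V) (y : {w : V | w ≠ v} → ℝ) (w : V) : ℝ :=
  if hw : w = v then 0 else y ⟨w, hw⟩

def foldFun (u v : V) (x : V → ℝ) (w : V) : ℝ :=
  if w = v then 0 else x w + if w = u then x v else 0

lemma bwd_fwd (u v : V) (x : V → ℝ) : bwdFun v (fwdFun u v x) = foldFun u v x := by
  funext w
  unfold bwdFun fwdFun foldFun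
  split_ifs <;> rfl

lemma fwd_bwd (u v : V) (y : {w : V | w ≠ v} → ℝ) :
    fwdFun u v (bwdFun v y) = y := by
  funext w
  unfold fwdFun bwdFun
  rw [dif_neg w.2, dif_pos rfl]
  simp

/-- key membership lemma for the forward map -/
lemma fwd_mem (G : SimpleGraph V) (u v : V) (huv : u ≠ v)
    (h : G.neighborSet v ⊆ G.neighborSet u) (x : V → ℝ)
    (hx : ∃ σ ∈ nbhdFaces G, (∀ a, x a ≠ 0 → a ∈ σ) ∧ (∀ a, 0 ≤ x a) ∧ ∑ a ∈ σ, x a = 1) :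
    ∃ τ ∈ nbhdFaces (G.induce {w | w ≠ v}),
      (∀ w, fwdFun u v x w ≠ 0 → w ∈ τ) ∧ (∀ w, 0 ≤ fwdFun u v x w) ∧
      ∑ w ∈ τ, fwdFun u v x w = 1 := by
  obtain ⟨σ, ⟨w0, hw0⟩, hsupp, hnn, hsum⟩ := hx
  have hnn' : ∀ w : {w : V | w ≠ v}, 0 ≤ fwdFun u v x w := by
    intro w
    unfold fwdFun
    have := hnn w.1
    have := hnn v
    split_ifs <;> linarith
  by_cases hv : v ∈ σ
  · -- use insert u (σ.erase v)
    have hadjv : G.Adj w0 v := hw0 v hv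
    have hadju : G.Adj w0 u := (h (show w0 ∈ G.neighborSet v from hadjv.symm)).symm
    have hw0v : (w0 : V) ≠ v := hadjv.ne
    refine ⟨(insert u (σ.erase v)).subtype (· ∈ ({w | w ≠ v} : Set V)),
      ⟨⟨w0, hw0v⟩, ?_⟩, ?_, hnn', ?_⟩
    · intro t ht
      rw [Finset.mem_subtype] at ht
      rcases Finset.mem_insert.mp ht with h1 | h1
      · show G.Adj w0 t.1
        rw [h1]; exact hadju
      · exact hw0 t.1 (Finset.mem_of_mem_erase h1)
    · intro w hw
      rw [Finset.mem_subtype]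
      by_cases hwu : w.1 = u
      · rw [hwu]; exact Finset.mem_insert_self _ _
      · apply Finset.mem_insert_of_mem
        apply Finset.mem_erase.mpr
        refine ⟨w.2, hsupp w.1 ?_⟩
        unfold fwdFun at hw
        rw [if_neg hwu, add_zero] at hw
        exact hw
    · have hrw : ∑ w ∈ (insert u (σ.erase v)).subtype (· ∈ ({w | w ≠ v} : Set V)),
          fwdFun u v x w
          = ∑ a ∈ (insert u (σ.erase v)).filter (· ∈ ({w | w ≠ v} : Set V)),
            (x a + if a = u then x v else 0) :=
        Finset.sum_subtype_eq_sum_filter (fun a => x a + if a = u then x v else 0)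
          (p := (· ∈ ({w | w ≠ v} : Set V)))
      have hfil : (insert u (σ.erase v)).filter (· ∈ ({w | w ≠ v} : Set V))
          = insert u (σ.erase v) := by
        apply Finset.filter_true_of_mem
        intro a ha
        rcases Finset.mem_insert.mp ha with h1 | h1
        · simpa [h1] using huv
        · exact (Finset.mem_erase.mp h1).1
      rw [hrw, hfil, Finset.sum_add_distrib, Finset.sum_ite_eq']
      have hu : u ∈ insert u (σ.erase v) := Finset.mem_insert_self _ _
      rw [if_pos hu]
      have herase : ∑ a ∈ σ.erase v, x a = 1 - x v := by
        have := Finset.sum_erase_add σ x hv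
        linarith [this, hsum]
      by_cases huσ : u ∈ σ.erase v
      · rw [Finset.insert_eq_self.mpr huσ, herase]; ring
      · rw [Finset.sum_insert huσ, herase]
        have hxu : x u = 0 := by
          by_contra hne
          have := hsupp u hne
          exact huσ (Finset.mem_erase.mpr ⟨huv, this⟩)
        rw [hxu]; ring
  · -- v ∉ σ : x v = 0
    have hxv : x v = 0 := by
      by_contra hne; exact hv (hsupp v hne)
    have hfwd : ∀ w : {w : V | w ≠ v}, fwdFun u v x w = x w.1 := by
      intro w; unfold fwdFun; rw [hxv]; simp
    refine ⟨σ.subtype (· ∈ ({w | w ≠ v} : Set V)), ?_, ?_, hnn', ?_⟩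
    · by_cases hw0v : w0 = v
      · refine ⟨⟨u, huv⟩, ?_⟩
        intro t ht
        rw [Finset.mem_subtype] at ht
        have hadj : G.Adj v t.1 := hw0v ▸ hw0 t.1 ht
        exact h (show t.1 ∈ G.neighborSet v from hadj)
      · refine ⟨⟨w0, hw0v⟩, ?_⟩
        intro t ht
        rw [Finset.mem_subtype] at ht
        exact hw0 t.1 ht
    · intro w hw
      rw [Finset.mem_subtype]
      rw [hfwd] at hw
      exact hsupp w.1 hw
    · rw [Finset.sum_congr rfl (fun w _ => hfwd w)]
      have hrw : (∑ w ∈ σ.subtype (· ∈ ({w | w ≠ v} : Set V)), x w.1) =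
          ∑ a ∈ σ.filter (· ∈ ({w | w ≠ v} : Set V)), x a :=
        Finset.sum_subtype_eq_sum_filter x (p := (· ∈ ({w | w ≠ v} : Set V)))
      rw [hrw]
      have hfil : σ.filter (· ∈ ({w | w ≠ v} : Set V)) = σ := by
        apply Finset.filter_true_of_mem
        intro a ha
        intro hav
        exact hv (hav ▸ ha)
      rw [hfil, hsum]

lemma bwd_mem (G : SimpleGraph V) (v : V) (y : {w : V | w ≠ v} → ℝ)
    (hy : ∃ σ ∈ nbhdFaces (G.induce {w | w ≠ v}),
      (∀ a, y a ≠ 0 → a ∈ σ) ∧ (∀ a, 0 ≤ y a) ∧ ∑ a ∈ σ, y a = 1) :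
    ∃ τ ∈ nbhdFaces G, (∀ w, bwdFun v y w ≠ 0 → w ∈ τ) ∧ (∀ w, 0 ≤ bwdFun v y w) ∧
      ∑ w ∈ τ, bwdFun v y w = 1 := by
  obtain ⟨σ, ⟨w0, hw0⟩, hsupp, hnn, hsum⟩ := hy
  refine ⟨σ.image Subtype.val, ⟨w0.1, ?_⟩, ?_, ?_, ?_⟩
  · intro a ha
    obtain ⟨t, ht, rfl⟩ := Finset.mem_image.mp ha
    exact hw0 t ht
  · intro w hw
    unfold bwdFun at hw
    by_cases hwv : w = v
    · rw [dif_pos hwv] at hw; exact absurd rfl hw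
    · rw [dif_neg hwv] at hw
      exact Finset.mem_image.mpr ⟨⟨w, hwv⟩, hsupp _ hw, rfl⟩
  · intro w
    unfold bwdFun
    split_ifs
    · exact le_refl 0
    · exact hnn _
  · rw [Finset.sum_image (fun a _ b _ hab => Subtype.val_injective hab)]
    rw [← hsum]
    apply Finset.sum_congr rfl
    intro t _
    unfold bwdFun
    rw [dif_neg t.2]

lemma fold_mem (G : SimpleGraph V) (u v : V) (huv : u ≠ v)
    (h : G.neighborSet v ⊆ G.neighborSet u) (x : V → ℝ) (t : ℝ) (ht0 : 0 ≤ t) (ht1 : t ≤ 1)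
    (hx : ∃ σ ∈ nbhdFaces G, (∀ a, x a ≠ 0 → a ∈ σ) ∧ (∀ a, 0 ≤ x a) ∧ ∑ a ∈ σ, x a = 1) :
    ∃ τ ∈ nbhdFaces G,
      (∀ w, ((1 - t) * foldFun u v x w + t * x w) ≠ 0 → w ∈ τ) ∧
      (∀ w, 0 ≤ (1 - t) * foldFun u v x w + t * x w) ∧
      ∑ w ∈ τ, ((1 - t) * foldFun u v x w + t * x w) = 1 := by
  obtain ⟨σ, ⟨w0, hw0⟩, hsupp, hnn, hsum⟩ := hx
  have hfnn : ∀ w, 0 ≤ foldFun u v x w := by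
    intro w; unfold foldFun
    have := hnn w; have := hnn v
    split_ifs <;> linarith
  have hnn2 : ∀ w, 0 ≤ (1 - t) * foldFun u v x w + t * x w := fun w =>
    add_nonneg (mul_nonneg (by linarith) (hfnn w)) (mul_nonneg ht0 (hnn w))
  by_cases hv : v ∈ σ
  · have hadjv : G.Adj w0 v := hw0 v hv
    have hadju : G.Adj w0 u := (h (show w0 ∈ G.neighborSet v from hadjv.symm)).symm
    refine ⟨insert u σ, ⟨w0, ?_⟩, ?_, hnn2, ?_⟩
    · intro a ha
      rcases Finset.mem_insert.mp ha with h1 | h1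
      · rw [h1]; exact hadju
      · exact hw0 a h1
    · intro w hw
      by_contra hmem
      have hwu : w ≠ u := fun e => hmem (e ▸ Finset.mem_insert_self _ _)
      have hwσ : w ∉ σ := fun e => hmem (Finset.mem_insert_of_mem e)
      have hxw : x w = 0 := by
        by_contra hne; exact hwσ (hsupp w hne)
      have : foldFun u v x w = 0 := by
        unfold foldFun; rw [if_neg hwu, hxw]; simp
      rw [this, hxw] at hw
      simp at hw
    · have hsum_ins : ∑ a ∈ insert u σ, x a = 1 := by
        by_cases huσ : u ∈ σ
        · rw [Finset.insert_eq_self.mpr huσ]; exact hsum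
        · rw [Finset.sum_insert huσ]
          have hxu : x u = 0 := by
            by_contra hne; exact huσ (hsupp u hne)
          rw [hxu, hsum]; ring
      have hvins : v ∈ insert u σ := Finset.mem_insert_of_mem hv
      have huins : u ∈ (insert u σ).erase v :=
        Finset.mem_erase.mpr ⟨huv, Finset.mem_insert_self _ _⟩
      have hfsum : ∑ a ∈ insert u σ, foldFun u v x a = 1 := by
        rw [← Finset.sum_erase_add _ _ hvins]
        have hfv : foldFun u v x v = 0 := by unfold foldFun; rw [if_pos rfl]
        rw [hfv, add_zero]
        have : ∀ a ∈ (insert u σ).erase v, foldFun u v x a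
            = x a + if a = u then x v else 0 := by
          intro a ha
          unfold foldFun
          rw [if_neg (Finset.mem_erase.mp ha).1]
        rw [Finset.sum_congr rfl this, Finset.sum_add_distrib, Finset.sum_ite_eq',
          if_pos huins]
        have := Finset.sum_erase_add (insert u σ) x hvins
        linarith [hsum_ins]
      rw [Finset.sum_add_distrib, ← Finset.mul_sum, ← Finset.mul_sum, hfsum, hsum_ins]
      ring
  · have hxv : x v = 0 := by
      by_contra hne; exact hv (hsupp v hne)
    have heq : ∀ w, (1 - t) * foldFun u v x w + t * x w = x w := by
      intro w
      unfold foldFun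
      by_cases hwv : w = v
      · rw [if_pos hwv, hwv, hxv]; ring
      · rw [if_neg hwv, hxv]
        split_ifs <;> ring
    refine ⟨σ, ⟨w0, hw0⟩, ?_, hnn2, ?_⟩
    · intro w hw; rw [heq] at hw; exact hsupp w hw
    · rw [Finset.sum_congr rfl (fun w _ => heq w), hsum]


lemma continuous_fwdFun (u v : V) :
    Continuous fun x : V → ℝ => fwdFun u v x := by
  apply continuous_pi
  intro w
  unfold fwdFun
  by_cases hw : w.1 = u
  · simp only [if_pos hw]
    exact (continuous_apply w.1).add (continuous_apply v)
  · simp only [if_neg hw, add_zero]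
    exact continuous_apply w.1

lemma continuous_bwdFun (v : V) :
    Continuous fun y : {w : V | w ≠ v} → ℝ => bwdFun v y := by
  apply continuous_pi
  intro w
  unfold bwdFun
  by_cases hw : w = v
  · simp only [dif_pos hw]
    exact continuous_const
  · simp only [dif_neg hw]
    exact continuous_apply _

lemma continuous_foldFun (u v : V) (w : V) :
    Continuous fun x : V → ℝ => foldFun u v x w := by
  unfold foldFun
  by_cases hv : w = v
  · simp only [if_pos hv]; exact continuous_const
  · simp only [if_neg hv]
    by_cases hu : w = u
    · simp only [if_pos hu]
      exact (continuous_apply w).add (continuous_apply v)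
    · simp only [if_neg hu, add_zero]
      exact continuous_apply w

end Stmt9Aux

theorem stmt9 {V : Type*} (G : SimpleGraph V) (u v : V) (huv : u ≠ v)
    (h : G.neighborSet v ⊆ G.neighborSet u) :
    Nonempty (ContinuousMap.HomotopyEquiv (geomReal (nbhdFaces G))
      (geomReal (nbhdFaces (G.induce {w | w ≠ v})))) := by
  classical
  set K := nbhdFaces G
  set K' := nbhdFaces (G.induce {w | w ≠ v})
  let F : C(geomReal K, geomReal K') :=
    ⟨fun x => ⟨Stmt9Aux.fwdFun u v x.1, Stmt9Aux.fwd_mem G u v huv h x.1 x.2⟩,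
     Continuous.subtype_mk
       ((Stmt9Aux.continuous_fwdFun u v).comp continuous_subtype_val) _⟩
  let B : C(geomReal K', geomReal K) :=
    ⟨fun y => ⟨Stmt9Aux.bwdFun v y.1, Stmt9Aux.bwd_mem G v y.1 y.2⟩,
     Continuous.subtype_mk
       ((Stmt9Aux.continuous_bwdFun v).comp continuous_subtype_val) _⟩
  refine ⟨⟨F, B, ?_, ?_⟩⟩
  · -- left inverse up to homotopy
    have hcont : Continuous fun p : unitInterval × geomReal K =>
        (fun w => (1 - (p.1 : ℝ)) * Stmt9Aux.foldFun u v p.2.1 w + (p.1 : ℝ) * p.2.1 w :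
          V → ℝ) := by
      apply continuous_pi
      intro w
      have hc1 : Continuous fun p : unitInterval × geomReal K => (p.1 : ℝ) :=
        continuous_subtype_val.comp continuous_fst
      have hc2 : Continuous fun p : unitInterval × geomReal K =>
          Stmt9Aux.foldFun u v p.2.1 w :=
        (Stmt9Aux.continuous_foldFun u v w).comp (continuous_subtype_val.comp continuous_snd)
      have hc3 : Continuous fun p : unitInterval × geomReal K => p.2.1 w :=
        (continuous_apply w).comp (continuous_subtype_val.comp continuous_snd)
      exact (((continuous_const.sub hc1).mul hc2).add (hc1.mul hc3))
    refine ⟨⟨⟨fun p => ⟨fun w =>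
        (1 - (p.1 : ℝ)) * Stmt9Aux.foldFun u v p.2.1 w + (p.1 : ℝ) * p.2.1 w,
        Stmt9Aux.fold_mem G u v huv h p.2.1 (p.1 : ℝ) p.1.2.1 p.1.2.2 p.2.2⟩,
        Continuous.subtype_mk hcont _⟩, ?_, ?_⟩⟩
    · intro x
      apply Subtype.ext
      funext w
      show (1 - ((0 : unitInterval) : ℝ)) * Stmt9Aux.foldFun u v x.1 w
          + ((0 : unitInterval) : ℝ) * x.1 w = _
      have : ((B.comp F) x).1 w = Stmt9Aux.foldFun u v x.1 w := by
        show Stmt9Aux.bwdFun v (Stmt9Aux.fwdFun u v x.1) w = _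
        rw [Stmt9Aux.bwd_fwd]
      rw [this]
      norm_num
    · intro x
      apply Subtype.ext
      funext w
      show (1 - ((1 : unitInterval) : ℝ)) * Stmt9Aux.foldFun u v x.1 w
          + ((1 : unitInterval) : ℝ) * x.1 w = _
      have : ((ContinuousMap.id (geomReal K)) x).1 w = x.1 w := rfl
      rw [this]
      norm_num
  · -- right inverse: exact equality
    have heq : F.comp B = ContinuousMap.id _ := by
      apply ContinuousMap.ext
      intro y
      apply Subtype.ext
      show Stmt9Aux.fwdFun u v (Stmt9Aux.bwdFun v y.1) = y.1
      exact Stmt9Aux.fwd_bwd u v y.1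
    rw [heq]
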